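/- arXiv:1304.1315 — 5 statements merged into one kernel-verified Lean document; each statement's English description precedes it below -/
import Mathlib

section
/- Let k be even and let G=(V,E) be a k-uniform hypercycle of size s>0 with Laplacian tensor L. Then λ(L) = 2+2β^{k−2}, where β is the unique positive real solution of the equation 2β^k+β^2−1=0, which lies in the interval (1/2,1). -/
open Finset

variable {α : Type*} [DecidableEq α]

/-- The degree of a vertex `i`: the number of edges containing `i`. -/
def hdeg (E : Finset (Finset α)) (i : α) : ℕ := (E.filter (fun e => i ∈ e)).card

/-- The action of the Laplacian tensor: `(L x^{k-1})_i`. -/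
def lapAct (k : ℕ) (E : Finset (Finset α)) (x : α → ℝ) (i : α) : ℝ :=
  (hdeg E i : ℝ) * x i ^ (k - 1) - ∑ e ∈ E.filter (fun e => i ∈ e), ∏ j ∈ e.erase i, x j

/-- The action of the signless Laplacian tensor: `(Q x^{k-1})_i`. -/
def signAct (k : ℕ) (E : Finset (Finset α)) (x : α → ℝ) (i : α) : ℝ :=
  (hdeg E i : ℝ) * x i ^ (k - 1) + ∑ e ∈ E.filter (fun e => i ∈ e), ∏ j ∈ e.erase i, x j

/-- The action of the adjacency tensor: `(A x^{k-1})_i`. -/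
def adjAct (E : Finset (Finset α)) (x : α → ℝ) (i : α) : ℝ :=
  ∑ e ∈ E.filter (fun e => i ∈ e), ∏ j ∈ e.erase i, x j

/-- `lam` is an H-eigenvalue of the Laplacian tensor. -/
def IsLapEig (k : ℕ) (E : Finset (Finset α)) (lam : ℝ) : Prop :=
  ∃ x : α → ℝ, x ≠ 0 ∧ ∀ i, lapAct k E x i = lam * x i ^ (k - 1)

/-- `lam` is the largest H-eigenvalue of the Laplacian tensor. -/
def IsLargestLapEig (k : ℕ) (E : Finset (Finset α)) (lam : ℝ) : Prop :=
  IsLapEig k E lam ∧ ∀ mu : ℝ, IsLapEig k E mu → mu ≤ lam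

/-- `lam` is an H-eigenvalue of the signless Laplacian tensor. -/
def IsSignEig (k : ℕ) (E : Finset (Finset α)) (lam : ℝ) : Prop :=
  ∃ x : α → ℝ, x ≠ 0 ∧ ∀ i, signAct k E x i = lam * x i ^ (k - 1)

/-- `lam` is the largest H-eigenvalue of the signless Laplacian tensor. -/
def IsLargestSignEig (k : ℕ) (E : Finset (Finset α)) (lam : ℝ) : Prop :=
  IsSignEig k E lam ∧ ∀ mu : ℝ, IsSignEig k E mu → mu ≤ lam

/-- `lam` is an H-eigenvalue of the adjacency tensor. -/
def IsAdjEig (k : ℕ) (E : Finset (Finset α)) (lam : ℝ) : Prop :=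
  ∃ x : α → ℝ, x ≠ 0 ∧ ∀ i, adjAct E x i = lam * x i ^ (k - 1)

/-- `lam` is the largest H-eigenvalue of the adjacency tensor. -/
def IsLargestAdjEig (k : ℕ) (E : Finset (Finset α)) (lam : ℝ) : Prop :=
  IsAdjEig k E lam ∧ ∀ mu : ℝ, IsAdjEig k E mu → mu ≤ lam

/-- `G = (V, E)` is a `k`-uniform hyperstar of size `d`: there is a heart `h` and a
disjoint partition of the remaining vertices into `d` parts of size `k-1`, the edges
being the heart together with one part. -/
def IsHyperstar (k d : ℕ) (E : Finset (Finset α)) : Prop :=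
  ∃ (h : α) (P : Fin d → Finset α),
    (∀ i, h ∉ P i) ∧
    (∀ i, (P i).card = k - 1) ∧
    (∀ i j, i ≠ j → Disjoint (P i) (P j)) ∧
    (∀ v : α, v ≠ h → ∃ i, v ∈ P i) ∧
    E = Finset.image (fun i => insert h (P i)) Finset.univ

/-- The hypergraph is connected: any two distinct vertices are joined by a chain of
pairwise intersecting edges. -/
def IsConnectedH (E : Finset (Finset α)) : Prop :=
  ∀ i j : α, i ≠ j → Relation.TransGen (fun a b : α => ∃ e ∈ E, a ∈ e ∧ b ∈ e) i j

/-- For `k` even: the hypergraph is odd-bipartite. -/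
def IsOddBipartite [Fintype α] (E : Finset (Finset α)) : Prop :=
  E = ∅ ∨ ∃ V₁ : Finset α, V₁ ≠ ∅ ∧ V₁ ≠ Finset.univ ∧ ∀ e ∈ E, Odd (e ∩ V₁).card

/-- `G = (V, E)` is a `k`-uniform hypercycle of size `s`. -/
def IsHypercycle (k : ℕ) (s : ℕ) [NeZero s] (E : Finset (Finset α)) : Prop :=
  ∃ P : Fin s → Finset α,
    (∀ i, (P i).card = k) ∧
    (∀ v : α, ∃ i, v ∈ P i) ∧
    E = Finset.image P Finset.univ ∧
    (∀ i : Fin s, (P i ∩ P (i + 1)).card = 1) ∧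
    (∀ i j : Fin s, i ≠ j → j ≠ i + 1 → i ≠ j + 1 → P i ∩ P j = ∅) ∧
    Function.Injective (fun i : Fin s => P i ∩ P (i + 1))


lemma beta_mono {k : ℕ} (hk : 3 ≤ k) : StrictMonoOn (fun b : ℝ => 2*b^k + b^2 - 1) (Set.Ici 0) := by
  intro a ha b hb hab
  simp only
  have h1 : a^k < b^k := pow_lt_pow_left₀ hab ha (by omega)
  have h2 : a^2 ≤ b^2 := pow_le_pow_left₀ ha hab.le 2
  nlinarith

lemma beta_spec {k : ℕ} (hk : 3 ≤ k) :
    ∃ b ∈ Set.Ioo (1/2 : ℝ) 1, 2*b^k + b^2 - 1 = 0 := by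
  have hc : ContinuousOn (fun b : ℝ => 2*b^k + b^2 - 1) (Set.Icc (1/2) 1) := by
    fun_prop
  have hiv := intermediate_value_Ioo (by norm_num : (1/2:ℝ) ≤ 1) hc
  have hmem : (0:ℝ) ∈ Set.Ioo ((fun b : ℝ => 2*b^k + b^2 - 1) (1/2)) ((fun b : ℝ => 2*b^k + b^2 - 1) 1) := by
    constructor
    · simp only
      have : (1/2:ℝ)^k ≤ (1/2)^3 := pow_le_pow_of_le_one (by norm_num) (by norm_num) hk
      norm_num at this ⊢
      nlinarith
    · norm_num
  obtain ⟨b, hb, hb0⟩ := hiv hmem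
  exact ⟨b, hb, hb0⟩

lemma beta_uniq {k : ℕ} (hk : 3 ≤ k) {b c : ℝ} (hb : 0 < b) (hc : 0 < c)
    (hb0 : 2*b^k + b^2 - 1 = 0) (hc0 : 2*c^k + c^2 - 1 = 0) : c = b := by
  rcases lt_trichotomy c b with h | h | h
  · have := beta_mono hk (Set.mem_Ici.2 hc.le) (Set.mem_Ici.2 hb.le) h
    simp only at this; linarith
  · exact h
  · have := beta_mono hk (Set.mem_Ici.2 hb.le) (Set.mem_Ici.2 hc.le) h
    simp only at this; linarith
section Cyc
variable {n k s : ℕ} [NeZero s]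

lemma fin_one_ne_zero (hs : 2 ≤ s) : (1 : Fin s) ≠ 0 := by
  have : s ≠ 1 := by omega
  simpa [Fin.one_eq_zero_iff] using this

lemma fin_add_one_ne (hs : 2 ≤ s) (i : Fin s) : i + 1 ≠ i := by
  intro h
  exact fin_one_ne_zero hs (by
    have : i + 1 = i + 0 := by simpa using h
    exact add_left_cancel this)

structure CycleStruct (k s : ℕ) [NeZero s] (n : ℕ) (E : Finset (Finset (Fin n))) where
  P : Fin s → Finset (Fin n)
  w : Fin s → Fin n
  hk3 : 3 ≤ k
  hs3 : 3 ≤ s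
  hcard : ∀ i, (P i).card = k
  hcover : ∀ v, ∃ i, v ∈ P i
  hE : E = Finset.image P Finset.univ
  hw : ∀ i, P i ∩ P (i+1) = {w i}
  hdisj : ∀ i j, i ≠ j → j ≠ i+1 → i ≠ j+1 → P i ∩ P j = ∅
  hwinj : Function.Injective w

namespace CycleStruct
variable {E : Finset (Finset (Fin n))} (C : CycleStruct k s n E)

lemma w_mem_left (i : Fin s) : C.w i ∈ C.P i := by
  have h := C.hw i
  have : C.w i ∈ C.P i ∩ C.P (i+1) := by rw [h]; exact Finset.mem_singleton_self _
  exact (Finset.mem_inter.1 this).1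

lemma w_mem_right (i : Fin s) : C.w i ∈ C.P (i+1) := by
  have h := C.hw i
  have : C.w i ∈ C.P i ∩ C.P (i+1) := by rw [h]; exact Finset.mem_singleton_self _
  exact (Finset.mem_inter.1 this).2

/-- key pair lemma -/
lemma pair {v : Fin n} {a b : Fin s} (ha : v ∈ C.P a) (hb : v ∈ C.P b) (hab : a ≠ b) :
    (b = a + 1 ∧ v = C.w a) ∨ (a = b + 1 ∧ v = C.w b) := by
  have hadj : b = a + 1 ∨ a = b + 1 := by
    by_contra hcon
    push_neg at hcon
    have := C.hdisj a b hab hcon.1 hcon.2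
    have hv : v ∈ C.P a ∩ C.P b := Finset.mem_inter.2 ⟨ha, hb⟩
    rw [this] at hv
    exact absurd hv (Finset.notMem_empty v)
  rcases hadj with h | h
  · left
    refine ⟨h, ?_⟩
    have hv : v ∈ C.P a ∩ C.P (a+1) := Finset.mem_inter.2 ⟨ha, h ▸ hb⟩
    rw [C.hw a] at hv
    exact Finset.mem_singleton.1 hv
  · right
    refine ⟨h, ?_⟩
    have hv : v ∈ C.P b ∩ C.P (b+1) := Finset.mem_inter.2 ⟨hb, h ▸ ha⟩
    rw [C.hw b] at hv
    exact Finset.mem_singleton.1 hv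

lemma Pinj : Function.Injective C.P := by
  intro a b hab
  by_contra hne
  have hcap : C.P a ∩ C.P b = C.P a := by rw [hab, Finset.inter_self]
  have hk := C.hcard a
  have hadj : b = a + 1 ∨ a = b + 1 := by
    by_contra hcon
    push_neg at hcon
    have hd := C.hdisj a b hne hcon.1 hcon.2
    rw [hcap] at hd
    have : C.w a ∈ C.P a := C.w_mem_left a
    rw [hd] at this
    exact absurd this (Finset.notMem_empty _)
  have hk3 := C.hk3
  rcases hadj with h | h
  · have := C.hw a
    rw [← h, hcap] at this
    rw [this] at hk
    simp at hk
    omega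
  · have := C.hw b
    rw [← h, Finset.inter_comm, hcap] at this
    rw [this] at hk
    simp at hk
    omega

end CycleStruct
end Cyc
section Mk
variable {n k s : ℕ} [NeZero s] {E : Finset (Finset (Fin n))}

lemma cycleStruct_of (hk : 3 ≤ k) (hcyc : IsHypercycle k s E) :
    Nonempty (CycleStruct k s n E) := by
  obtain ⟨P, h1, h2, h3, h4, h5, h6⟩ := hcyc
  have hs1 : s ≠ 1 := by
    intro hs
    subst hs
    have h0 := h4 0
    have : (0 : Fin 1) + 1 = 0 := rfl
    rw [this, Finset.inter_self, h1 0] at h0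
    omega
  have hs2 : s ≠ 2 := by
    intro hs
    subst hs
    have : P 0 ∩ P (0 + 1) = P 1 ∩ P (1 + 1) := by
      have e1 : (0 : Fin 2) + 1 = 1 := rfl
      have e2 : (1 : Fin 2) + 1 = 0 := rfl
      rw [e1, e2, Finset.inter_comm]
    have h01 : (0 : Fin 2) = 1 := h6 this
    simp at h01
  have hs3 : 3 ≤ s := by
    have := NeZero.pos s
    omega
  have hw' : ∀ i : Fin s, ∃ a, P i ∩ P (i+1) = {a} := fun i => Finset.card_eq_one.mp (h4 i)
  choose w hw using hw'
  refine ⟨⟨P, w, hk, hs3, h1, h2, h3, hw, h5, ?_⟩⟩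
  intro a b hab
  apply h6
  simp only
  rw [hw a, hw b, hab]

end Mk
section Deg
variable {n k s : ℕ} [NeZero s]

lemma fin_sub_one_ne (hs : 2 ≤ s) (t : Fin s) : t - 1 ≠ t := by
  intro h
  have h2 : t + 1 = t := by
    nth_rewrite 1 [← h]
    rw [sub_add_cancel]
  exact fin_add_one_ne hs t h2

lemma fin_sub_one_add_one (t : Fin s) : t - 1 + 1 = t := sub_add_cancel t 1

variable {E : Finset (Finset (Fin n))} (C : CycleStruct k s n E)

namespace CycleStruct

lemma hs2 (C : CycleStruct k s n E) : 2 ≤ s := by have := C.hs3; omega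

/-- Set of edge-indices containing `v`. -/
def D (v : Fin n) : Finset (Fin s) := Finset.univ.filter (fun i => v ∈ C.P i)

lemma mem_D {v : Fin n} {i : Fin s} : i ∈ C.D v ↔ v ∈ C.P i := by
  simp [D]

lemma filter_eq (v : Fin n) :
    E.filter (fun e => v ∈ e) = (C.D v).image C.P := by
  have hE := C.hE
  ext e
  simp only [Finset.mem_filter, Finset.mem_image, mem_D]
  constructor
  · rintro ⟨he, hv⟩
    rw [hE] at he
    simp only [Finset.mem_image, Finset.mem_univ, true_and] at he
    obtain ⟨i, rfl⟩ := he
    exact ⟨i, hv, rfl⟩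
  · rintro ⟨i, hv, rfl⟩
    refine ⟨?_, hv⟩
    have h2 : C.P i ∈ Finset.image C.P Finset.univ :=
      Finset.mem_image_of_mem _ (Finset.mem_univ i)
    rwa [← hE] at h2

lemma hdeg_eq (v : Fin n) : hdeg E v = (C.D v).card := by
  rw [hdeg, C.filter_eq, Finset.card_image_of_injective _ C.Pinj]

lemma sum_filter (v : Fin n) (f : Finset (Fin n) → ℝ) :
    ∑ e ∈ E.filter (fun e => v ∈ e), f e = ∑ i ∈ C.D v, f (C.P i) := by
  rw [C.filter_eq, Finset.sum_image (fun a _ b _ h => C.Pinj h)]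

lemma w_mem_right' (t : Fin s) : C.w (t - 1) ∈ C.P t := by
  have := C.w_mem_right (t - 1)
  rwa [fin_sub_one_add_one] at this

lemma D_w (i : Fin s) : C.D (C.w i) = {i, i + 1} := by
  ext t
  simp only [mem_D, Finset.mem_insert, Finset.mem_singleton]
  constructor
  · intro ht
    by_contra hcon
    push_neg at hcon
    rcases C.pair (C.w_mem_left i) ht hcon.1.symm with ⟨h1, h2⟩ | ⟨h1, h2⟩
    · exact hcon.2 h1
    · exact fin_add_one_ne C.hs2 t (by rw [← h1]; exact C.hwinj h2)
  · rintro (rfl | rfl)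
    · exact C.w_mem_left t
    · exact C.w_mem_right i

/-- v is not any intersection vertex. -/
def IsInterior (v : Fin n) : Prop := ∀ j, v ≠ C.w j

lemma D_interior {v : Fin n} {t : Fin s} (hv : v ∈ C.P t) (h : C.IsInterior v) :
    C.D v = {t} := by
  ext t'
  simp only [mem_D, Finset.mem_singleton]
  constructor
  · intro ht'
    by_contra hne
    rcases C.pair hv ht' (Ne.symm hne) with ⟨h1, h2⟩ | ⟨h1, h2⟩
    · exact h t h2
    · exact h t' h2
  · rintro rfl; exact hv

/-- The interior vertices of edge `t`. -/
def I (t : Fin s) : Finset (Fin n) := ((C.P t).erase (C.w (t - 1))).erase (C.w t)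

lemma w_ne_w_sub_one (t : Fin s) : C.w t ≠ C.w (t - 1) :=
  fun h => fin_sub_one_ne C.hs2 t (C.hwinj h).symm

lemma w_mem_erase (t : Fin s) : C.w t ∈ (C.P t).erase (C.w (t - 1)) :=
  Finset.mem_erase.2 ⟨C.w_ne_w_sub_one t, C.w_mem_left t⟩

lemma I_card (t : Fin s) : (C.I t).card = k - 2 := by
  rw [I, Finset.card_erase_of_mem (C.w_mem_erase t),
    Finset.card_erase_of_mem (C.w_mem_right' t), C.hcard]
  omega

lemma I_subset (t : Fin s) : C.I t ⊆ C.P t :=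
  (Finset.erase_subset _ _).trans (Finset.erase_subset _ _)

lemma I_interior {v : Fin n} {t : Fin s} (hv : v ∈ C.I t) : C.IsInterior v := by
  intro j hj
  rw [I, Finset.mem_erase, Finset.mem_erase] at hv
  obtain ⟨hne1, hne2, hmem⟩ := hv
  subst hj
  rcases eq_or_ne t j with rfl | htj
  · exact hne1 rfl
  rcases eq_or_ne t (j + 1) with rfl | htj1
  · exact hne2 (by rw [add_sub_cancel_right])
  · rcases C.pair (C.w_mem_left j) hmem (Ne.symm htj) with ⟨h1, h2⟩ | ⟨h1, h2⟩
    · exact htj1 h1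
    · exact hne1 h2

lemma mem_P_cases {v : Fin n} {t : Fin s} (hv : v ∈ C.P t) :
    v = C.w (t - 1) ∨ v = C.w t ∨ v ∈ C.I t := by
  rcases eq_or_ne v (C.w (t-1)) with h | h
  · exact Or.inl h
  rcases eq_or_ne v (C.w t) with h2 | h2
  · exact Or.inr (Or.inl h2)
  · exact Or.inr (Or.inr (Finset.mem_erase.2 ⟨h2, Finset.mem_erase.2 ⟨h, hv⟩⟩))

lemma prod_P (t : Fin s) (f : Fin n → ℝ) :
    ∏ j ∈ C.P t, f j = f (C.w (t - 1)) * (f (C.w t) * ∏ j ∈ C.I t, f j) := by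
  rw [I, Finset.mul_prod_erase _ _ (C.w_mem_erase t),
    Finset.mul_prod_erase _ _ (C.w_mem_right' t)]

lemma I_nonempty (t : Fin s) : (C.I t).Nonempty := by
  rw [← Finset.card_pos, C.I_card]
  have := C.hk3
  omega

end CycleStruct
end Deg
section Low
variable {n k s : ℕ} [NeZero s] {E : Finset (Finset (Fin n))}

namespace CycleStruct
variable (C : CycleStruct k s n E)

/-- A chosen special interior vertex in each edge. -/
noncomputable def z (t : Fin s) : Fin n := (C.I t).min' (C.I_nonempty t)

lemma z_mem (t : Fin s) : C.z t ∈ C.I t := Finset.min'_mem _ _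

lemma I_unique {v : Fin n} {t t' : Fin s} (hv : v ∈ C.I t) (h : v ∈ C.P t') : t' = t := by
  have hD := C.D_interior (C.I_subset t hv) (C.I_interior hv)
  have : t' ∈ C.D v := C.mem_D.2 h
  rw [hD] at this
  exact Finset.mem_singleton.1 this

end CycleStruct

open CycleStruct in
lemma eig_lower_aux {β : ℝ} (C : CycleStruct k s n E) (hkeven : Even k)
    (hβ : 0 < β) (hroot : 2*β^k + β^2 - 1 = 0) :
    IsLapEig k E (2 + 2*β^(k-2)) := by
  classical
  obtain ⟨K, rfl⟩ : ∃ K, k = K + 3 := ⟨k - 3, by have := C.hk3; omega⟩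
  set x : Fin n → ℝ := fun v => if ∃ i, v = C.w i then 1 else if ∃ t, v = C.z t then -β else β
    with hxdef
  have hodd : Odd (K + 2) := by
    rcases Nat.even_or_odd (K+2) with h | h
    · exfalso
      have : Odd (K + 3) := by
        rcases h with ⟨c, hc⟩; exact ⟨c, by omega⟩
      exact (Nat.not_even_iff_odd.2 this) hkeven
    · exact h
  -- values of x
  have hxw : ∀ i, x (C.w i) = 1 := by
    intro i; simp only [hxdef]; rw [if_pos ⟨i, rfl⟩]
  have hxz : ∀ t, x (C.z t) = -β := by
    intro t
    simp only [hxdef]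
    rw [if_neg, if_pos ⟨t, rfl⟩]
    rintro ⟨i, hi⟩
    exact C.I_interior (C.z_mem t) i hi
  have hxo : ∀ t, ∀ v ∈ C.I t, v ≠ C.z t → x v = β := by
    intro t v hv hne
    simp only [hxdef]
    rw [if_neg, if_neg]
    · rintro ⟨t', ht'⟩
      have : t = t' := C.I_unique (C.z_mem t') (ht' ▸ C.I_subset t hv)
      exact hne (this ▸ ht')
    · rintro ⟨i, hi⟩
      exact C.I_interior hv i hi
  -- product over the interior of an edge
  have hprodI : ∀ t, ∏ j ∈ C.I t, x j = -β ^ (K + 1) := by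
    intro t
    rw [← Finset.mul_prod_erase _ _ (C.z_mem t), hxz]
    have : ∏ j ∈ (C.I t).erase (C.z t), x j = β ^ K := by
      rw [Finset.prod_congr rfl (fun v hv => hxo t v (Finset.mem_of_mem_erase hv)
        (Finset.ne_of_mem_erase hv)), Finset.prod_const,
        Finset.card_erase_of_mem (C.z_mem t), C.I_card, show K+3-2-1 = K by omega]
    rw [this]
    ring
  -- product over a full edge
  have hprodP : ∀ t, ∏ j ∈ C.P t, x j = -β ^ (K + 1) := by
    intro t
    rw [C.prod_P, hxw, hxw, hprodI]
    ring
  refine ⟨x, ?_, ?_⟩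
  · intro h0
    have := congrFun h0 (C.w 0)
    rw [hxw] at this
    norm_num at this
  intro v
  obtain ⟨t, hvt⟩ := C.hcover v
  have hkey : β ^ (K+2) + β ^ K = (2 + 2*β^(K+1)) * β^(K+2) := by
    have h1 : 2*β^(K+3) = 1 - β^2 := by linarith
    linear_combination (-(β^K)) * h1
  have hbne : β ≠ 0 := ne_of_gt hβ
  rcases C.mem_P_cases hvt with hv | hv | hv
  · -- v = w (t-1) : intersection vertex
    obtain ⟨i, rfl⟩ : ∃ i, v = C.w i := ⟨t - 1, hv⟩
    rw [lapAct, C.hdeg_eq, C.sum_filter, C.D_w, hxw]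
    have hne : i ∉ ({i+1} : Finset (Fin s)) := by
      simp only [Finset.mem_singleton]
      exact fun h => fin_add_one_ne C.hs2 i h.symm
    rw [Finset.sum_insert hne, Finset.sum_singleton,
      Finset.card_insert_of_notMem hne, Finset.card_singleton]
    have e1 : ∏ j ∈ (C.P i).erase (C.w i), x j = -β^(K+1) := by
      have := Finset.prod_erase_mul (C.P i) x (C.w_mem_left i)
      rw [hxw, mul_one] at this
      rw [this, hprodP]
    have e2 : ∏ j ∈ (C.P (i+1)).erase (C.w i), x j = -β^(K+1) := by
      have := Finset.prod_erase_mul (C.P (i+1)) x (C.w_mem_right i)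
      rw [hxw, mul_one] at this
      rw [this, hprodP]
    rw [e1, e2]
    simp only [show K+3-2 = K+1 by omega, show K+3-1 = K+2 by omega, one_pow]
    ring
  · -- v = w t
    obtain ⟨i, rfl⟩ : ∃ i, v = C.w i := ⟨t, hv⟩
    rw [lapAct, C.hdeg_eq, C.sum_filter, C.D_w, hxw]
    have hne : i ∉ ({i+1} : Finset (Fin s)) := by
      simp only [Finset.mem_singleton]
      exact fun h => fin_add_one_ne C.hs2 i h.symm
    rw [Finset.sum_insert hne, Finset.sum_singleton,
      Finset.card_insert_of_notMem hne, Finset.card_singleton]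
    have e1 : ∏ j ∈ (C.P i).erase (C.w i), x j = -β^(K+1) := by
      have := Finset.prod_erase_mul (C.P i) x (C.w_mem_left i)
      rw [hxw, mul_one] at this
      rw [this, hprodP]
    have e2 : ∏ j ∈ (C.P (i+1)).erase (C.w i), x j = -β^(K+1) := by
      have := Finset.prod_erase_mul (C.P (i+1)) x (C.w_mem_right i)
      rw [hxw, mul_one] at this
      rw [this, hprodP]
    rw [e1, e2]
    simp only [show K+3-2 = K+1 by omega, show K+3-1 = K+2 by omega, one_pow]
    ring
  · -- interior vertex
    rw [lapAct, C.hdeg_eq, C.sum_filter, C.D_interior (C.I_subset t hv) (C.I_interior hv),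
      Finset.sum_singleton, Finset.card_singleton]
    have hprod_erase : (∏ j ∈ (C.P t).erase v, x j) * x v = -β^(K+1) := by
      rw [Finset.prod_erase_mul _ _ hvt, hprodP]
    rcases eq_or_ne v (C.z t) with rfl | hvz
    · rw [hxz] at hprod_erase ⊢
      have hxvne : (-β) ≠ 0 := neg_ne_zero.2 hbne
      have e3 : ∏ j ∈ (C.P t).erase (C.z t), x j = β ^ K := by
        apply mul_right_cancel₀ hxvne
        rw [hprod_erase]
        ring
      rw [e3]
      simp only [show K+3-2 = K+1 by omega, show K+3-1 = K+2 by omega]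
      rw [hodd.neg_pow]
      push_cast
      linear_combination -hkey
    · rw [hxo t v hv hvz] at hprod_erase ⊢
      have e3 : ∏ j ∈ (C.P t).erase v, x j = -β ^ K := by
        apply mul_right_cancel₀ hbne
        rw [hprod_erase]
        ring
      rw [e3]
      simp only [show K+3-2 = K+1 by omega, show K+3-1 = K+2 by omega]
      push_cast
      linear_combination hkey
end Low
section Up
variable {n k s : ℕ} [NeZero s] {E : Finset (Finset (Fin n))}

namespace CycleStruct
variable (C : CycleStruct k s n E)

lemma prod_P_erase_int {v : Fin n} {t : Fin s} (hv : v ∈ C.I t) (f : Fin n → ℝ) :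
    ∏ j ∈ (C.P t).erase v, f j
      = f (C.w (t-1)) * (f (C.w t) * ∏ j ∈ (C.I t).erase v, f j) := by
  have hv1 : v ≠ C.w (t-1) := C.I_interior hv (t-1)
  have hv2 : v ≠ C.w t := C.I_interior hv t
  have h1 : C.w (t-1) ∈ (C.P t).erase v :=
    Finset.mem_erase.2 ⟨hv1.symm, C.w_mem_right' t⟩
  rw [← Finset.mul_prod_erase _ f h1, Finset.erase_right_comm]
  have h2 : C.w t ∈ ((C.P t).erase (C.w (t-1))).erase v :=
    Finset.mem_erase.2 ⟨hv2.symm, C.w_mem_erase t⟩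
  rw [← Finset.mul_prod_erase _ f h2, Finset.erase_right_comm]
  rfl

end CycleStruct

open CycleStruct in
lemma eig_upper_aux {β μ : ℝ} (C : CycleStruct k s n E) (hkeven : Even k)
    (hβ : 0 < β) (hroot : 2*β^k + β^2 - 1 = 0) (hμ : IsLapEig k E μ) :
    μ ≤ 2 + 2*β^(k-2) := by
  classical
  obtain ⟨m, rfl⟩ : ∃ m, k = 2*m+4 := by
    obtain ⟨c, hc⟩ := hkeven
    exact ⟨c - 2, by have := C.hk3; omega⟩
  set h : ℕ := m + 1 with hh
  have hk2 : 2*m+4-2 = 2*h := by omega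
  have hk1 : 2*m+4-1 = 2*h+1 := by omega
  have hk3' : 2*m+4-3 = 2*m+1 := by omega
  rw [hk2]
  set lam : ℝ := 2 + 2*β^(2*h) with hlam
  have hlam2 : 2 < lam := by
    have : 0 < β^(2*h) := pow_pos hβ _
    rw [hlam]; linarith
  by_cases hμ2 : μ ≤ 2
  · linarith
  push_neg at hμ2
  obtain ⟨x, hx0, hxe⟩ := hμ
  set y : Fin n → ℝ := fun v => |x v| with hy
  have hy0 : ∀ v, 0 ≤ y v := fun v => abs_nonneg _
  -- eigen equation, rearranged, for interior vertices
  have hint : ∀ t : Fin s, ∀ v ∈ C.I t,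
      ∏ j ∈ (C.P t).erase v, x j = (1 - μ) * x v ^ (2*m+3) := by
    intro t v hv
    have he := hxe v
    rw [lapAct, C.hdeg_eq, C.sum_filter,
      C.D_interior (C.I_subset t hv) (C.I_interior hv),
      Finset.sum_singleton, Finset.card_singleton] at he
    rw [show 2*m+4-1 = 2*m+3 by omega] at he
    push_cast at he
    linarith
  -- all intersection values zero forces x = 0
  have hfin : Finset.Nonempty (Finset.univ : Finset (Fin s)) := Finset.univ_nonempty
  obtain ⟨i₀, -, hi₀⟩ := Finset.exists_max_image Finset.univ (fun i => y (C.w i)) hfin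
  set p : ℝ := y (C.w i₀) with hp
  have hple : ∀ i, y (C.w i) ≤ p := fun i => hi₀ i (Finset.mem_univ i)
  have hppos : 0 < p := by
    rcases (hp ▸ (hy0 (C.w i₀))).lt_or_eq with h' | h'
    · exact h'
    exfalso
    have hwz : ∀ i, x (C.w i) = 0 := by
      intro i
      have := hple i
      rw [← h'] at this
      have := abs_nonpos_iff.mp (le_trans (le_of_eq rfl) this)
      exact this
    obtain ⟨v, hv⟩ := Function.ne_iff.1 hx0
    obtain ⟨t, hvt⟩ := C.hcover v
    rcases C.mem_P_cases hvt with h1 | h1 | h1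
    · exact hv (h1 ▸ hwz (t-1))
    · exact hv (h1 ▸ hwz t)
    · have he := hint t v h1
      have hzero : ∏ j ∈ (C.P t).erase v, x j = 0 := by
        apply Finset.prod_eq_zero (i := C.w t)
        · exact Finset.mem_erase.2 ⟨(C.I_interior h1 t).symm, C.w_mem_left t⟩
        · exact hwz t
      rw [hzero] at he
      have : x v ^ (2*m+3) = 0 := by
        rcases mul_eq_zero.1 he.symm with h' | h'
        · exfalso; have : μ ≠ 1 := by linarith
          apply this; linarith
        · exact h'
      exact hv ((pow_eq_zero_iff (by omega : 2*m+3 ≠ 0)).1 this)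
  -- max interior value in each edge
  have hjm : ∀ t : Fin s, ∃ j ∈ C.I t, ∀ j' ∈ C.I t, y j' ≤ y j :=
    fun t => Finset.exists_max_image (C.I t) y (C.I_nonempty t)
  choose jm hjm_mem hjm_max using hjm
  set mx : Fin s → ℝ := fun t => y (jm t) with hmx
  have hmx0 : ∀ t, 0 ≤ mx t := fun t => hy0 _
  -- Step A: (μ-1) * mx t ^ 2 ≤ p ^ 2
  have stepA : ∀ t, (μ - 1) * (mx t)^2 ≤ p^2 := by
    intro t
    have he := hint t (jm t) (hjm_mem t)
    have habs : (μ - 1) * (mx t)^(2*m+3) = ∏ j ∈ (C.P t).erase (jm t), y j := by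
      have h1 : |∏ j ∈ (C.P t).erase (jm t), x j| = ∏ j ∈ (C.P t).erase (jm t), y j :=
        Finset.abs_prod _ _
      rw [← h1, he, abs_mul, abs_pow, abs_of_nonpos (by linarith : (1:ℝ) - μ ≤ 0)]
      simp only [hmx, hy]
      ring
    have hbound : ∏ j ∈ (C.P t).erase (jm t), y j ≤ p * (p * (mx t)^(2*m+1)) := by
      rw [C.prod_P_erase_int (hjm_mem t)]
      have hIb : ∏ j ∈ (C.I t).erase (jm t), y j ≤ (mx t)^(2*m+1) := by
        calc ∏ j ∈ (C.I t).erase (jm t), y j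
            ≤ ∏ _j ∈ (C.I t).erase (jm t), mx t := by
              apply Finset.prod_le_prod (fun i _ => hy0 i)
              intro i hi
              exact hjm_max t i (Finset.mem_of_mem_erase hi)
          _ = (mx t)^(2*m+1) := by
              rw [Finset.prod_const, Finset.card_erase_of_mem (hjm_mem t), C.I_card,
                show 2*m+4-2-1 = 2*m+1 by omega]
      have h1 : (0:ℝ) ≤ y (C.w t) := hy0 _
      have h2 : (0:ℝ) ≤ ∏ j ∈ (C.I t).erase (jm t), y j :=
        Finset.prod_nonneg (fun i _ => hy0 i)
      have := mul_le_mul (hple t) hIb h2 (le_of_lt hppos)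
      exact mul_le_mul (hple (t-1)) this (mul_nonneg h1 h2) (le_of_lt hppos)
    rcases eq_or_lt_of_le (hmx0 t) with h0 | h0
    · rw [← h0]; norm_num; positivity
    · have key : (μ - 1) * (mx t)^(2*m+3) ≤ p^2 * (mx t)^(2*m+1) := by
        rw [habs]; nlinarith [hbound]
      have hpow : (0:ℝ) < (mx t)^(2*m+1) := pow_pos h0 _
      have : (μ - 1) * (mx t)^2 * (mx t)^(2*m+1) ≤ p^2 * (mx t)^(2*m+1) := by
        calc (μ - 1) * (mx t)^2 * (mx t)^(2*m+1) = (μ - 1) * (mx t)^(2*m+3) := by ring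
          _ ≤ p^2 * (mx t)^(2*m+1) := key
      exact le_of_mul_le_mul_right this hpow
  -- Step B
  have hB : (μ - 2) * p^(2*m+3) ≤ p * ((mx i₀)^(2*h) + (mx (i₀+1))^(2*h)) := by
    have he := hxe (C.w i₀)
    rw [lapAct, C.hdeg_eq, C.sum_filter, C.D_w] at he
    have hne : i₀ ∉ ({i₀+1} : Finset (Fin s)) := by
      simp only [Finset.mem_singleton]
      exact fun hq => fin_add_one_ne C.hs2 i₀ hq.symm
    rw [Finset.sum_insert hne, Finset.sum_singleton,
      Finset.card_insert_of_notMem hne, Finset.card_singleton,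
      show 2*m+4-1 = 2*m+3 by omega] at he
    push_cast at he
    have hsum : ∏ j ∈ (C.P i₀).erase (C.w i₀), x j + ∏ j ∈ (C.P (i₀+1)).erase (C.w i₀), x j
        = (2 - μ) * x (C.w i₀) ^ (2*m+3) := by linarith
    -- bound each product  |prod| <= p * mx t ^ (2h)
    have hIb : ∀ t : Fin s, ∏ j ∈ C.I t, y j ≤ (mx t)^(2*h) := by
      intro t
      calc ∏ j ∈ C.I t, y j ≤ ∏ _j ∈ C.I t, mx t := by
            apply Finset.prod_le_prod (fun i _ => hy0 i)
            exact fun i hi => hjm_max t i hi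
        _ = (mx t)^(2*h) := by
            rw [Finset.prod_const, C.I_card, show 2*m+4-2 = 2*h by omega]
    have hIpos : ∀ t : Fin s, (0:ℝ) ≤ ∏ j ∈ C.I t, y j :=
      fun t => Finset.prod_nonneg (fun i _ => hy0 i)
    have hb1 : |∏ j ∈ (C.P i₀).erase (C.w i₀), x j| ≤ p * (mx i₀)^(2*h) := by
      rw [Finset.abs_prod]
      have hY : (∏ j ∈ (C.P i₀).erase (C.w i₀), y j) * p
          = (y (C.w (i₀-1)) * ∏ j ∈ C.I i₀, y j) * p := by
        rw [hp, Finset.prod_erase_mul _ _ (C.w_mem_left i₀), C.prod_P]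
        ring
      have hY2 := mul_right_cancel₀ (ne_of_gt hppos) hY
      rw [hY2]
      exact mul_le_mul (hple (i₀-1)) (hIb i₀) (hIpos i₀) (le_of_lt hppos)
    have hb2 : |∏ j ∈ (C.P (i₀+1)).erase (C.w i₀), x j| ≤ p * (mx (i₀+1))^(2*h) := by
      rw [Finset.abs_prod]
      have hw' : C.w ((i₀+1)-1) = C.w i₀ := by rw [add_sub_cancel_right]
      have hY : (∏ j ∈ (C.P (i₀+1)).erase (C.w i₀), y j) * p
          = (y (C.w (i₀+1)) * ∏ j ∈ C.I (i₀+1), y j) * p := by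
        rw [hp, Finset.prod_erase_mul _ _ (C.w_mem_right i₀), C.prod_P, hw']
        ring
      have hY2 := mul_right_cancel₀ (ne_of_gt hppos) hY
      rw [hY2]
      exact mul_le_mul (hple (i₀+1)) (hIb (i₀+1)) (hIpos (i₀+1)) (le_of_lt hppos)
    have habs : (μ - 2) * p^(2*m+3) = |(2 - μ) * x (C.w i₀) ^ (2*m+3)| := by
      rw [abs_mul, abs_pow, abs_of_nonpos (by linarith : (2:ℝ) - μ ≤ 0)]
      simp only [hp, hy]
      ring
    calc (μ - 2) * p^(2*m+3)
        = |(2 - μ) * x (C.w i₀) ^ (2*m+3)| := habs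
      _ = |∏ j ∈ (C.P i₀).erase (C.w i₀), x j + ∏ j ∈ (C.P (i₀+1)).erase (C.w i₀), x j| := by
          rw [hsum]
      _ ≤ |∏ j ∈ (C.P i₀).erase (C.w i₀), x j| + |∏ j ∈ (C.P (i₀+1)).erase (C.w i₀), x j| :=
          abs_add_le _ _
      _ ≤ p * (mx i₀)^(2*h) + p * (mx (i₀+1))^(2*h) := add_le_add hb1 hb2
      _ = p * ((mx i₀)^(2*h) + (mx (i₀+1))^(2*h)) := by ring
  -- Step A': raise to h-th power
  have hμ1 : (0:ℝ) ≤ μ - 1 := by linarith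
  have hpw : (0:ℝ) ≤ (μ-1)^h := pow_nonneg hμ1 h
  have hple2 : ∀ t, (μ-1)^h * (mx t)^(2*h) ≤ p^(2*h) := by
    intro t
    have h1 : ((μ-1) * (mx t)^2)^h ≤ (p^2)^h := by
      apply pow_le_pow_left₀ _ (stepA t) h
      positivity
    rw [mul_pow, ← pow_mul, ← pow_mul] at h1
    exact h1
  -- combine: (mu-2)(mu-1)^h <= 2
  have hmain : (μ - 2) * (μ - 1)^h ≤ 2 := by
    have step1 : (μ-2) * p^(2*m+3) * (μ-1)^h
        ≤ p * ((mx i₀)^(2*h) + (mx (i₀+1))^(2*h)) * (μ-1)^h :=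
      mul_le_mul_of_nonneg_right hB hpw
    have e1 := hple2 i₀
    have e2 := hple2 (i₀+1)
    have step2 : p * ((mx i₀)^(2*h) + (mx (i₀+1))^(2*h)) * (μ-1)^h ≤ p * (2 * p^(2*h)) := by
      nlinarith [hppos]
    have hq : p * (2 * p^(2*h)) = 2 * p^(2*m+3) := by
      rw [hh]; ring
    have step3 : (μ-2) * (μ-1)^h * p^(2*m+3) ≤ 2 * p^(2*m+3) := by
      calc (μ-2) * (μ-1)^h * p^(2*m+3) = (μ-2) * p^(2*m+3) * (μ-1)^h := by ring
        _ ≤ p * ((mx i₀)^(2*h) + (mx (i₀+1))^(2*h)) * (μ-1)^h := step1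
        _ ≤ p * (2 * p^(2*h)) := step2
        _ = 2 * p^(2*m+3) := hq
    exact le_of_mul_le_mul_right step3 (pow_pos hppos _)
  -- the threshold satisfies equality
  have hkey : (lam - 1) * β^2 = 1 := by
    rw [hlam, hh]
    linear_combination hroot
  have hlam_eq : (lam - 2) * (lam - 1)^h = 2 := by
    have hβpow : (0:ℝ) < β^(2*h) := pow_pos hβ _
    apply mul_right_cancel₀ (ne_of_gt hβpow)
    have h1 : ((lam-1) * β^2)^h = 1 := by rw [hkey, one_pow]
    calc (lam-2) * (lam-1)^h * β^(2*h)
        = (lam-2) * ((lam-1) * β^2)^h := by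
          rw [mul_pow, ← pow_mul, mul_assoc]
      _ = lam - 2 := by rw [h1, mul_one]
      _ = 2 * β^(2*h) := by rw [hlam]; ring
  -- conclude
  by_contra hgt
  push_neg at hgt
  have c1 : lam - 2 < μ - 2 := by linarith
  have c2 : (lam-1)^h ≤ (μ-1)^h := pow_le_pow_left₀ (by linarith) (by linarith) h
  have c3 : (0:ℝ) < (lam-1)^h := pow_pos (by linarith) h
  nlinarith [hmain, hlam_eq]
end Up

/-- For `k` even and a `k`-uniform hypercycle of size `s > 0` with
Laplacian tensor `L`, `λ(L) = 2 + 2β^(k-2)` where `β` is the unique positive real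
solution of `2β^k + β^2 - 1 = 0`, which lies in `(1/2, 1)`. -/
theorem largest_lap_eig_hypercycle_even {k s n : ℕ} [NeZero s] (hk : 3 ≤ k)
    (hkeven : Even k) (hs : 0 < s) (hn : n = s * (k - 1))
    (E : Finset (Finset (Fin n))) (hcyc : IsHypercycle k s E)
    (lam : ℝ) (hlam : IsLargestLapEig k E lam) :
    ∃ b : ℝ, (0 < b ∧ 2 * b ^ k + b ^ 2 - 1 = 0) ∧
      (∀ c : ℝ, 0 < c → 2 * c ^ k + c ^ 2 - 1 = 0 → c = b) ∧
      b ∈ Set.Ioo (1 / 2 : ℝ) 1 ∧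
      lam = 2 + 2 * b ^ (k - 2) := by
  obtain ⟨C⟩ := cycleStruct_of hk hcyc
  obtain ⟨b, hbmem, hbroot⟩ := beta_spec hk
  have hbpos : 0 < b := lt_trans (by norm_num) hbmem.1
  have hlow : IsLapEig k E (2 + 2*b^(k-2)) := eig_lower_aux C hkeven hbpos hbroot
  have hge : 2 + 2*b^(k-2) ≤ lam := hlam.2 _ hlow
  have hle : lam ≤ 2 + 2*b^(k-2) := eig_upper_aux C hkeven hbpos hbroot hlam.1
  exact ⟨b, ⟨hbpos, hbroot⟩, fun c hc hc0 => beta_uniq hk hbpos hc hbroot hc0,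
    hbmem, le_antisymm hle hge⟩
end

section
/- Let G=(V,E) be a k-uniform hyperstar of size d>0 and let x∈ℝ^n be an H-eigenvector of the Laplacian tensor L of G corresponding to an H-eigenvalue λ with λ≠0 and λ≠1. If x_i=0 for some vertex i other than the heart, then x_j=0 for all vertices j≠heart in the leaf le(i) containing i; moreover, in this situation, if h is the heart then x_h≠0. -/
open Finset

variable {α : Type*} [DecidableEq α]

/-- Let `G` be a `k`-uniform hyperstar of size `d > 0` with heart `h`,
leaf parts `P 0, …, P (d-1)` (the leaf containing a non-heart vertex `i ∈ P t` being
`insert h (P t)`), and let `x` be an H-eigenvector of the Laplacian tensor corresponding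
to an H-eigenvalue `lam` with `lam ≠ 0` and `lam ≠ 1`. If `x i = 0` for some
vertex `i` other than the heart, then `x j = 0` for all non-heart vertices `j` of the
leaf containing `i`, and moreover `x h ≠ 0`. -/
theorem hyperstar_eigvec_zero_on_leaf {n k d : ℕ} (hk : 3 ≤ k) (hkn : k ≤ n)
    (hd : 0 < d) (h : Fin n) (P : Fin d → Finset (Fin n))
    (hhP : ∀ i, h ∉ P i) (hPcard : ∀ i, (P i).card = k - 1)
    (hPdisj : ∀ i j, i ≠ j → Disjoint (P i) (P j))
    (hPcover : ∀ v : Fin n, v ≠ h → ∃ i, v ∈ P i)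
    (E : Finset (Finset (Fin n)))
    (hE : E = Finset.image (fun i => insert h (P i)) Finset.univ)
    (lam : ℝ) (hlam0 : lam ≠ 0) (hlam1 : lam ≠ 1)
    (x : Fin n → ℝ) (hx : x ≠ 0)
    (heig : ∀ i, lapAct k E x i = lam * x i ^ (k - 1))
    (i : Fin n) (hih : i ≠ h) (hxi : x i = 0) (t : Fin d) (hit : i ∈ P t) :
    (∀ j ∈ P t, x j = 0) ∧ x h ≠ 0 := by
  have hk1 : k - 1 ≠ 0 := by omega
  have h1lam : (1 : ℝ) - lam ≠ 0 := sub_ne_zero.mpr fun hc => hlam1 hc.symm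
  have key : ∀ (s : Fin d) (j : Fin n), j ∈ P s →
      (1 - lam) * x j ^ (k - 1) = x h * ∏ v ∈ (P s).erase j, x v := by
    intro s j hj
    have hjh : j ≠ h := fun hc => hhP s (hc ▸ hj)
    have hfilt : E.filter (fun e => j ∈ e) = {insert h (P s)} := by
      rw [hE, Finset.filter_image]
      have huniv : Finset.univ.filter (fun i => j ∈ insert h (P i)) = {s} := by
        ext i
        simp only [Finset.mem_filter, Finset.mem_univ, true_and, Finset.mem_insert,
          Finset.mem_singleton]
        constructor
        · rintro (hjh' | hji)
          · exact absurd hjh' hjh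
          · by_contra hne
            exact Finset.disjoint_left.mp (hPdisj i s hne) hji hj
        · rintro rfl; exact Or.inr hj
      rw [huniv, Finset.image_singleton]
    have hdeg1 : hdeg E j = 1 := by rw [hdeg, hfilt]; simp
    have herase : (insert h (P s)).erase j = insert h ((P s).erase j) := by
      ext v
      simp only [Finset.mem_erase, Finset.mem_insert]
      constructor
      · rintro ⟨hv, rfl | hv2⟩
        · exact Or.inl rfl
        · exact Or.inr ⟨hv, hv2⟩
      · rintro (rfl | ⟨hv, hv2⟩)
        · exact ⟨Ne.symm hjh, Or.inl rfl⟩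
        · exact ⟨hv, Or.inr hv2⟩
    have heq := heig j
    rw [lapAct, hdeg1, hfilt] at heq
    rw [Finset.sum_singleton, herase,
      Finset.prod_insert (by simp [hhP s] : h ∉ (P s).erase j)] at heq
    push_cast at heq
    linear_combination heq
  have hxh : x h ≠ 0 := by
    intro hxh0
    apply hx
    funext v
    show x v = 0
    by_cases hv : v = h
    · rw [hv, hxh0]
    · obtain ⟨s, hs⟩ := hPcover v hv
      have hkey := key s v hs
      rw [hxh0, zero_mul] at hkey
      have := (mul_eq_zero.mp hkey).resolve_left h1lam
      exact pow_eq_zero_iff hk1 |>.mp this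
  refine ⟨?_, hxh⟩
  intro j hjt
  by_cases hji : j = i
  · rw [hji, hxi]
  · have hkey := key t j hjt
    have hprod : ∏ v ∈ (P t).erase j, x v = 0 :=
      Finset.prod_eq_zero (Finset.mem_erase.mpr ⟨fun hc => hji hc.symm, hit⟩) hxi
    rw [hprod, mul_zero] at hkey
    have := (mul_eq_zero.mp hkey).resolve_left h1lam
    exact pow_eq_zero_iff hk1 |>.mp this
end

section
/- Let k be even and let G=(V,E) be a k-uniform hyperstar of size d>0 with Laplacian tensor L. Then there exists an H-eigenvector z∈ℝ^n of L corresponding to λ(L) such that z_i takes one constant value for all i∈sup(z) with i not the heart. -/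
open Finset

variable {α : Type*} [DecidableEq α]

lemma exists_root (K : ℕ) (d : ℝ) (hK : 2 ≤ K) (hd : 1 ≤ d) :
    ∃ μ : ℝ, d < μ ∧ (μ - d) * (μ - 1) ^ K = d := by
  have hcont : ContinuousOn (fun t : ℝ => (t - d) * (t - 1) ^ K) (Set.Icc d (d+1)) := by
    fun_prop
  have hmem : d ∈ Set.Icc ((d - d) * (d - 1) ^ K) ((d + 1 - d) * (d + 1 - 1) ^ K) := by
    constructor
    · simp; positivity
    · have h1 : d ^ 1 ≤ d ^ K := pow_le_pow_right₀ hd (by omega)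
      rw [pow_one] at h1
      calc d ≤ d ^ K := h1
        _ = (d + 1 - d) * (d + 1 - 1) ^ K := by ring
  obtain ⟨μ, hμI, hμ⟩ := intermediate_value_Icc (by linarith : d ≤ d + 1) hcont hmem
  refine ⟨μ, ?_, hμ⟩
  rcases lt_or_eq_of_le hμI.1 with h' | h'
  · exact h'
  · exfalso; rw [← h'] at hμ; simp at hμ; linarith


/-- For `k` even and a `k`-uniform hyperstar of size `d > 0` with heart
`h` and Laplacian tensor `L`, there is an H-eigenvector `z` of `L` corresponding to
`λ(L)` such that `z i` is a constant for all `i` in the support of `z` other than the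
heart. -/
theorem hyperstar_even_constant_eigvec {n k d : ℕ} (hk : 3 ≤ k) (hkn : k ≤ n)
    (hkeven : Even k) (hd : 0 < d) (h : Fin n) (P : Fin d → Finset (Fin n))
    (hhP : ∀ i, h ∉ P i) (hPcard : ∀ i, (P i).card = k - 1)
    (hPdisj : ∀ i j, i ≠ j → Disjoint (P i) (P j))
    (hPcover : ∀ v : Fin n, v ≠ h → ∃ i, v ∈ P i)
    (E : Finset (Finset (Fin n)))
    (hE : E = Finset.image (fun i => insert h (P i)) Finset.univ)
    (lam : ℝ) (hlam : IsLargestLapEig k E lam) :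
    ∃ z : Fin n → ℝ, z ≠ 0 ∧ (∀ i, lapAct k E z i = lam * z i ^ (k - 1)) ∧
      ∃ c : ℝ, ∀ i, i ≠ h → z i ≠ 0 → z i = c := by
  have hK2 : 2 ≤ k - 1 := by omega
  set K := k - 1 with hKdef
  have hk1 : k = K + 1 := by omega
  have hKodd : Odd K := by
    obtain ⟨m, hm⟩ := hkeven
    exact ⟨m - 1, by omega⟩
  have hd1 : (1:ℝ) ≤ d := by exact_mod_cast hd
  have hPne : ∀ m, (P m).Nonempty := fun m => Finset.card_pos.mp (by rw [hPcard]; omega)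
  have hinj : Function.Injective (fun i : Fin d => insert h (P i)) := by
    intro i j hij
    by_contra hne
    have hPij : P i = P j := by
      have h2 := congrArg (fun s => Finset.erase s h) hij
      simpa [Finset.erase_insert (hhP i), Finset.erase_insert (hhP j)] using h2
    have h3 := disjoint_self.mp (hPij ▸ hPdisj i j hne)
    exact (hPne j).ne_empty (hPij ▸ h3)
  have hiH : ∀ m : Fin d, ∀ i ∈ P m, i ≠ h := fun m i hi hih => hhP m (hih ▸ hi)
  have hfh : E.filter (fun e => h ∈ e) = E := by
    rw [Finset.filter_eq_self]
    intro f hf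
    rw [hE] at hf
    obtain ⟨m, -, rfl⟩ := Finset.mem_image.mp hf
    exact Finset.mem_insert_self _ _
  have hdegh : hdeg E h = d := by
    rw [hdeg, hfh, hE, Finset.card_image_of_injective _ hinj, Finset.card_univ,
      Fintype.card_fin]
  have hfi : ∀ m : Fin d, ∀ i ∈ P m, E.filter (fun e => i ∈ e) = {insert h (P m)} := by
    intro m i hi
    ext f
    simp only [Finset.mem_filter, Finset.mem_singleton, hE, Finset.mem_image,
      Finset.mem_univ, true_and]
    constructor
    · rintro ⟨⟨j, rfl⟩, hif⟩
      have hij : i ∈ P j := by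
        rcases Finset.mem_insert.mp hif with h1 | h1
        · exact absurd h1 (hiH m i hi)
        · exact h1
      have hjm : j = m := by
        by_contra hjm
        exact Finset.disjoint_left.mp (hPdisj j m hjm) hij hi
      rw [hjm]
    · rintro rfl
      exact ⟨⟨m, rfl⟩, Finset.mem_insert_of_mem hi⟩
  have hdegi : ∀ m : Fin d, ∀ i ∈ P m, hdeg E i = 1 := by
    intro m i hi; rw [hdeg, hfi m i hi, Finset.card_singleton]
  have hlapH : ∀ x : Fin n → ℝ, lapAct k E x h =
      (d:ℝ) * x h ^ K - ∑ m : Fin d, ∏ j ∈ P m, x j := by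
    intro x
    rw [lapAct, hdegh, hfh, hE, Finset.sum_image (fun a _ b _ hab => hinj hab)]
    congr 1
    apply Finset.sum_congr rfl
    intro m _
    rw [Finset.erase_insert (hhP m)]
  have hlapI : ∀ (x : Fin n → ℝ) (m : Fin d), ∀ i ∈ P m, lapAct k E x i =
      x i ^ K - x h * ∏ j ∈ (P m).erase i, x j := by
    intro x m i hi
    rw [lapAct, hdegi m i hi, hfi m i hi, Finset.sum_singleton, Nat.cast_one, one_mul]
    rw [Finset.erase_insert_of_ne (Ne.symm (hiH m i hi)),
      Finset.prod_insert (fun hc => hhP m (Finset.mem_of_mem_erase hc))]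
  obtain ⟨μ, hμd, hμeq⟩ := exists_root K d hK2 hd1
  set z : Fin n → ℝ := fun i => if i = h then 1 - μ else 1 with hz
  have hzh : z h = 1 - μ := by simp [hz]
  have hzi : ∀ i, i ≠ h → z i = 1 := by intro i hih; simp [hz, hih]
  have hμeq' : ((d:ℝ) - μ) * (1 - μ) ^ K = d := by
    have h1 : (1 - μ) ^ K = -((μ - 1) ^ K) := by
      rw [← neg_sub, hKodd.neg_pow]
    rw [h1]; linear_combination hμeq
  have hzeig : ∀ i, lapAct k E z i = μ * z i ^ K := by
    intro i
    by_cases hih : i = h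
    · subst hih
      rw [hlapH, hzh]
      have hp1 : ∀ m : Fin d, ∏ j ∈ P m, z j = 1 := fun m =>
        Finset.prod_eq_one (fun j hj => hzi j (hiH m j hj))
      rw [Finset.sum_congr rfl (fun m _ => hp1 m), Finset.sum_const, Finset.card_univ,
        Fintype.card_fin, nsmul_eq_mul, mul_one]
      linear_combination hμeq'
    · obtain ⟨m, hi⟩ := hPcover i hih
      rw [hlapI z m i hi, hzi i hih, hzh]
      have hp1 : ∏ j ∈ (P m).erase i, z j = 1 :=
        Finset.prod_eq_one (fun j hj => hzi j (hiH m j (Finset.mem_of_mem_erase hj)))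
      rw [hp1]
      ring
  have hzne : z ≠ 0 := by
    obtain ⟨v, hv⟩ := hPne ⟨0, hd⟩
    intro h0
    have h1 := hzi v (hiH _ v hv)
    rw [congrFun h0 v] at h1
    norm_num at h1
  have hμeig : IsLapEig k E μ := ⟨z, hzne, fun i => hzeig i⟩
  have hle1 : μ ≤ lam := hlam.2 μ hμeig
  have hle2 : lam ≤ μ := by
    obtain ⟨x, hxne, hxeig⟩ := hlam.1
    by_cases hxh : x h = 0
    · have hex : ∃ i, x i ≠ 0 := by
        by_contra h0; push_neg at h0; exact hxne (funext fun i => h0 i)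
      obtain ⟨i, hxi⟩ := hex
      have hih : i ≠ h := fun e => hxi (e ▸ hxh)
      obtain ⟨m, hi⟩ := hPcover i hih
      have he := hxeig i
      rw [hlapI x m i hi, hxh, zero_mul, sub_zero] at he
      have h2 : (lam - 1) * x i ^ K = 0 := by linear_combination -he
      rcases mul_eq_zero.mp h2 with h3 | h3
      · nlinarith
      · exact absurd h3 (pow_ne_zero _ hxi)
    · by_cases hld : lam ≤ d
      · linarith
      push_neg at hld
      have hkey : ∀ m : Fin d, (1 - lam) ^ K * ∏ j ∈ P m, x j = 0 ∨
          (1 - lam) ^ K * ∏ j ∈ P m, x j = x h ^ K := by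
        intro m
        by_cases hp : ∏ j ∈ P m, x j = 0
        · left; rw [hp, mul_zero]
        · right
          have heq : ∀ i ∈ P m, (1 - lam) * x i ^ k = x h * ∏ j ∈ P m, x j := by
            intro i hi
            have h1 := hxeig i
            rw [hlapI x m i hi] at h1
            have h2 : x i * (x h * ∏ j ∈ (P m).erase i, x j) = x h * ∏ j ∈ P m, x j := by
              rw [← Finset.mul_prod_erase (P m) x hi]; ring
            have h3 : (1 - lam) * x i ^ K = x h * ∏ j ∈ (P m).erase i, x j := by
              linear_combination h1
            calc (1 - lam) * x i ^ k = x i * ((1 - lam) * x i ^ K) := by rw [hk1]; ring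
              _ = x h * ∏ j ∈ P m, x j := by rw [h3, h2]
          have hprod : ∏ i ∈ P m, ((1 - lam) * x i ^ k)
              = ∏ i ∈ P m, (x h * ∏ j ∈ P m, x j) := Finset.prod_congr rfl heq
          rw [Finset.prod_mul_distrib, Finset.prod_const, Finset.prod_const, Finset.prod_pow,
            hPcard m] at hprod
          rw [mul_pow] at hprod
          -- hprod : (1-lam)^K * (∏ x)^k = x h ^ K * (∏ x)^K
          have h4 : ((1 - lam) ^ K * (∏ j ∈ P m, x j) - x h ^ K) * (∏ j ∈ P m, x j) ^ K = 0 := by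
            rw [hk1] at hprod
            linear_combination hprod
          rcases mul_eq_zero.mp h4 with h5 | h5
          · linarith [sub_eq_zero.mp h5]
          · exact absurd h5 (pow_ne_zero _ hp)
      have hsum := hxeig h
      rw [hlapH x] at hsum
      have hS : (1 - lam) ^ K * (((d:ℝ) - lam) * x h ^ K)
          = ∑ m : Fin d, (1 - lam) ^ K * ∏ j ∈ P m, x j := by
        rw [← Finset.mul_sum]
        linear_combination (1 - lam) ^ K * hsum
      have hband : |(1 - lam) ^ K * (((d:ℝ) - lam) * x h ^ K)| ≤ d * |x h ^ K| := by
        rw [hS]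
        calc |∑ m : Fin d, (1 - lam) ^ K * ∏ j ∈ P m, x j|
            ≤ ∑ m : Fin d, |(1 - lam) ^ K * ∏ j ∈ P m, x j| :=
              Finset.abs_sum_le_sum_abs _ _
          _ ≤ ∑ _m : Fin d, |x h ^ K| := by
              apply Finset.sum_le_sum
              intro m _
              rcases hkey m with h1 | h1 <;> rw [h1] <;> simp [abs_nonneg]
          _ = d * |x h ^ K| := by
              rw [Finset.sum_const, Finset.card_univ, Fintype.card_fin, nsmul_eq_mul]
      have hrw : (1 - lam) ^ K * (((d:ℝ) - lam) * x h ^ K)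
          = ((lam - d) * (lam - 1) ^ K) * x h ^ K := by
        rw [show (1 - lam : ℝ) = -(lam - 1) by ring, hKodd.neg_pow]; ring
      have hpos : 0 < (lam - d) * (lam - 1) ^ K := by
        apply mul_pos (by linarith)
        apply pow_pos; linarith
      have habs : |x h ^ K| > 0 := abs_pos.mpr (pow_ne_zero _ hxh)
      rw [hrw, abs_mul, abs_of_pos hpos] at hband
      have hfund : (lam - d) * (lam - 1) ^ K ≤ d := by
        by_contra hc
        push_neg at hc
        nlinarith
      by_contra hgt
      push_neg at hgt
      have hA : (μ - 1) ^ K < (lam - 1) ^ K := by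
        apply pow_lt_pow_left₀ (by linarith) (by linarith) (by omega)
      have hB : (0:ℝ) < (μ - 1) ^ K := by apply pow_pos; linarith
      nlinarith [hμeq]
  have hlm : lam = μ := le_antisymm hle2 hle1
  exact ⟨z, hzne, fun i => by rw [hlm]; exact hzeig i, 1, fun i hih _ => hzi i hih⟩
end

section
/- Let k be even and let G=(V,E) be a k-uniform hyperstar of size d>0 with Laplacian tensor L. If x∈ℝ^n is an H-eigenvector of L corresponding to λ(L), then sup(x)=[n]. Moreover, there exists an H-eigenvector z∈ℝ^n of L corresponding to λ(L) such that z_i takes one constant value for all vertices i other than the heart. -/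
open Finset

variable {α : Type*} [DecidableEq α]

private lemma auxExistsRoot {m : ℕ} (hm : m ≠ 0) {D : ℝ} (hD : 1 ≤ D) :
    ∃ t : ℝ, D < t ∧ (t - D) * (t - 1) ^ m = D := by
  have hc : ContinuousOn (fun t : ℝ => (t - D) * (t - 1) ^ m) (Set.Icc D (D + 1)) :=
    (Continuous.mul (by continuity) (by continuity)).continuousOn
  have hmem : D ∈ Set.Icc ((fun t : ℝ => (t - D) * (t - 1) ^ m) D)
      ((fun t : ℝ => (t - D) * (t - 1) ^ m) (D + 1)) := by
    constructor
    · simp only [sub_self, zero_mul]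
      linarith
    · simp only
      have h1 : (D + 1 - D) * (D + 1 - 1) ^ m = D ^ m := by
        have : (D + 1 - D) = 1 := by ring
        have h2 : (D + 1 - 1) = D := by ring
        rw [this, h2, one_mul]
      rw [h1]
      exact le_self_pow₀ hD hm
  obtain ⟨t, ht, hteq⟩ := intermediate_value_Icc (by linarith : D ≤ D + 1) hc hmem
  refine ⟨t, ?_, hteq⟩
  rcases eq_or_lt_of_le ht.1 with h | h
  · exfalso
    rw [← h] at hteq
    simp only [sub_self, zero_mul] at hteq
    linarith
  · exact h

private lemma auxMono {m : ℕ} {D a b : ℝ} (hD : 1 ≤ D) (hDa : D < a) (hab : a < b) :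
    (a - D) * (a - 1) ^ m < (b - D) * (b - 1) ^ m := by
  have h1 : (0:ℝ) < a - D := by linarith
  have h3 : (0:ℝ) < a - 1 := by linarith
  have h4 : (0:ℝ) < b - 1 := by linarith
  calc (a - D) * (a - 1) ^ m ≤ (a - D) * (b - 1) ^ m :=
        mul_le_mul_of_nonneg_left (pow_le_pow_left₀ h3.le (by linarith) m) h1.le
    _ < (b - D) * (b - 1) ^ m := mul_lt_mul_of_pos_right (by linarith) (pow_pos h4 m)

/-- For `k` even and a `k`-uniform hyperstar of size `d > 0` with heart
`h` and Laplacian tensor `L`: every H-eigenvector of `L` corresponding to `λ(L)` has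
full support `[n]`; moreover there is an H-eigenvector `z` of `L` corresponding to
`λ(L)` such that `z i` is a constant for all vertices `i` other than the heart. -/
theorem hyperstar_even_full_support {n k d : ℕ} (hk : 3 ≤ k) (hkn : k ≤ n)
    (hkeven : Even k) (hd : 0 < d) (h : Fin n) (P : Fin d → Finset (Fin n))
    (hhP : ∀ i, h ∉ P i) (hPcard : ∀ i, (P i).card = k - 1)
    (hPdisj : ∀ i j, i ≠ j → Disjoint (P i) (P j))
    (hPcover : ∀ v : Fin n, v ≠ h → ∃ i, v ∈ P i)
    (E : Finset (Finset (Fin n)))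
    (hE : E = Finset.image (fun i => insert h (P i)) Finset.univ)
    (lam : ℝ) (hlam : IsLargestLapEig k E lam) :
    (∀ x : Fin n → ℝ, x ≠ 0 → (∀ i, lapAct k E x i = lam * x i ^ (k - 1)) →
      ∀ i, x i ≠ 0) ∧
    ∃ z : Fin n → ℝ, z ≠ 0 ∧ (∀ i, lapAct k E z i = lam * z i ^ (k - 1)) ∧
      ∃ c : ℝ, ∀ i, i ≠ h → z i = c := by
  have hk1 : k - 1 ≠ 0 := by omega
  have hkk : k - 1 + 1 = k := by omega
  have hodd : Odd (k - 1) := Nat.Even.sub_odd (by omega) hkeven odd_one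
  have hd1 : (1:ℝ) ≤ (d:ℝ) := by exact_mod_cast hd
  have hPne : ∀ i, (P i).Nonempty := fun i => Finset.card_pos.mp (by rw [hPcard]; omega)
  have hvh : ∀ (i : Fin d) (v : Fin n), v ∈ P i → v ≠ h := fun i v hv hvh => hhP i (hvh ▸ hv)
  have huniq : ∀ (v : Fin n) (i j : Fin d), v ∈ P i → v ∈ P j → i = j := by
    intro v i j hi hj
    by_contra hij
    exact Finset.disjoint_left.mp (hPdisj i j hij) hi hj
  have hinj : Function.Injective (fun i : Fin d => insert h (P i)) := by
    intro i j hij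
    simp only at hij
    have hPij : P i = P j := by
      have := congrArg (fun s => Finset.erase s h) hij
      simpa [Finset.erase_insert (hhP i), Finset.erase_insert (hhP j)] using this
    by_contra hne
    obtain ⟨v, hv⟩ := hPne i
    exact Finset.disjoint_left.mp (hPdisj i j hne) hv (hPij ▸ hv)
  have hmemE : ∀ a : Finset (Fin n), a ∈ E ↔ ∃ i, a = insert h (P i) := by
    intro a; simp [hE, eq_comm]
  have hcardE : E.card = d := by
    rw [hE, Finset.card_image_of_injective _ hinj, Finset.card_univ, Fintype.card_fin]
  have hfh : E.filter (fun e => h ∈ e) = E := by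
    apply Finset.filter_true_of_mem
    intro a ha
    obtain ⟨i, rfl⟩ := (hmemE a).mp ha
    exact Finset.mem_insert_self _ _
  have hfv : ∀ (v : Fin n) (i₀ : Fin d), v ∈ P i₀ →
      E.filter (fun e => v ∈ e) = {insert h (P i₀)} := by
    intro v i₀ hv
    ext a
    simp only [Finset.mem_filter, Finset.mem_singleton]
    constructor
    · rintro ⟨ha, hva⟩
      obtain ⟨i, rfl⟩ := (hmemE a).mp ha
      rcases Finset.mem_insert.mp hva with h1 | h1
      · exact absurd h1 (hvh i₀ v hv)
      · rw [huniq v i i₀ h1 hv]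
    · rintro rfl
      exact ⟨(hmemE _).mpr ⟨i₀, rfl⟩, Finset.mem_insert_of_mem hv⟩
  have hlaph : ∀ x : Fin n → ℝ,
      lapAct k E x h = d * x h ^ (k-1) - ∑ i : Fin d, ∏ j ∈ P i, x j := by
    intro x
    unfold lapAct hdeg
    rw [hfh, hcardE, hE, Finset.sum_image (fun i _ j _ hij => hinj hij)]
    congr 1
    apply Finset.sum_congr rfl
    intro i _
    rw [Finset.erase_insert (hhP i)]
  have hlapv : ∀ (x : Fin n → ℝ) (v : Fin n) (i₀ : Fin d), v ∈ P i₀ →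
      lapAct k E x v = x v ^ (k-1) - x h * ∏ j ∈ (P i₀).erase v, x j := by
    intro x v i₀ hv
    unfold lapAct hdeg
    rw [hfv v i₀ hv, Finset.card_singleton, Finset.sum_singleton,
      Finset.erase_insert_of_ne (Ne.symm (hvh i₀ v hv)),
      Finset.prod_insert (fun hmem => hhP i₀ (Finset.mem_of_mem_erase hmem))]
    push_cast
    ring
  obtain ⟨t, hdt, hteq⟩ := auxExistsRoot hk1 hd1
  have hneg : ∀ u : ℝ, (1 - u) ^ (k-1) = -((u - 1) ^ (k-1)) := by
    intro u
    rw [show (1 - u : ℝ) = -(u - 1) by ring, hodd.neg_pow]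
  set z : Fin n → ℝ := fun i => if i = h then 1 - t else 1 with hz
  have hz_h : z h = 1 - t := if_pos rfl
  have hz_v : ∀ v, v ≠ h → z v = 1 := fun v hv => if_neg hv
  have hzeig : ∀ i, lapAct k E z i = t * z i ^ (k - 1) := by
    intro i
    rcases eq_or_ne i h with rfl | hih
    · rw [hlaph, hz_h]
      have hsum : ∑ i : Fin d, ∏ j ∈ P i, z j = (d:ℝ) := by
        rw [Finset.sum_congr rfl
          (fun i _ => Finset.prod_eq_one (fun j hj => hz_v j (hvh i j hj)))]
        simp
      rw [hsum, hneg t]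
      linear_combination hteq
    · obtain ⟨i₀, hi₀⟩ := hPcover i hih
      rw [hlapv z i i₀ hi₀, hz_v i hih, hz_h]
      have hone : ∏ j ∈ (P i₀).erase i, z j = 1 :=
        Finset.prod_eq_one (fun j hj => hz_v j (hvh i₀ j (Finset.mem_of_mem_erase hj)))
      rw [hone]
      ring
  obtain ⟨v₀, hv₀⟩ := hPne ⟨0, hd⟩
  have hzne : z ≠ 0 := by
    intro h0
    have hzz : z v₀ = 0 := by rw [h0]; rfl
    rw [hz_v v₀ (hvh _ _ hv₀)] at hzz
    norm_num at hzz
  have htle : t ≤ lam := hlam.2 t ⟨z, hzne, hzeig⟩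
  have hdlam : (d:ℝ) < lam := lt_of_lt_of_le hdt htle
  have h1lam : (1:ℝ) < lam := lt_of_le_of_lt hd1 hdlam
  have key : ∀ x : Fin n → ℝ, x ≠ 0 → (∀ i, lapAct k E x i = lam * x i ^ (k - 1)) →
      ∃ s : ℕ, s ≤ d ∧ (lam - d) * (lam - 1) ^ (k-1) = s ∧ (s = d → ∀ i, x i ≠ 0) := by
    intro x hx heig
    have hveq : ∀ (v : Fin n) (i₀ : Fin d), v ∈ P i₀ →
        (1 - lam) * x v ^ (k-1) = x h * ∏ j ∈ (P i₀).erase v, x j := by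
      intro v i₀ hv
      have hv2 := heig v
      rw [hlapv x v i₀ hv] at hv2
      linear_combination hv2
    have hheq : ((d:ℝ) - lam) * x h ^ (k-1) = ∑ i : Fin d, ∏ j ∈ P i, x j := by
      have hh2 := heig h
      rw [hlaph x] at hh2
      linear_combination hh2
    have hxh : x h ≠ 0 := by
      intro hxh0
      apply hx
      funext v
      show x v = 0
      rcases eq_or_ne v h with rfl | hvh'
      · exact hxh0
      · obtain ⟨i₀, hi₀⟩ := hPcover v hvh'
        have hv3 := hveq v i₀ hi₀
        rw [hxh0, zero_mul] at hv3
        have h1l : (1 - lam) ≠ 0 := by linarith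
        have hpow : x v ^ (k-1) = 0 := (mul_eq_zero.mp hv3).resolve_left h1l
        exact (pow_eq_zero_iff hk1).mp hpow
    set S := Finset.univ.filter (fun i : Fin d => ∀ v ∈ P i, x v ≠ 0) with hS
    have hgood : ∀ i ∈ S, (1 - lam) ^ (k-1) * ∏ j ∈ P i, x j = x h ^ (k-1) := by
      intro i hi
      have hne : ∀ v ∈ P i, x v ≠ 0 := (Finset.mem_filter.mp hi).2
      have hprodne : (∏ j ∈ P i, x j) ≠ 0 := Finset.prod_ne_zero_iff.mpr hne
      have hxpow : ∀ a : ℝ, a ^ (k-1) * a = a ^ k := fun a => by rw [← pow_succ, hkk]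
      have hveq' : ∀ v ∈ P i, (1 - lam) * x v ^ k = x h * ∏ j ∈ P i, x j := by
        intro v hv
        have h1 := hveq v i hv
        have h2 : (∏ j ∈ (P i).erase v, x j) * x v = ∏ j ∈ P i, x j :=
          Finset.prod_erase_mul _ _ hv
        calc (1 - lam) * x v ^ k = ((1 - lam) * x v ^ (k-1)) * x v := by
              rw [mul_assoc, hxpow]
          _ = (x h * ∏ j ∈ (P i).erase v, x j) * x v := by rw [h1]
          _ = x h * ∏ j ∈ P i, x j := by rw [mul_assoc, h2]
      have hprod := Finset.prod_congr rfl hveq'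
      rw [Finset.prod_mul_distrib, Finset.prod_const, Finset.prod_pow,
        Finset.prod_const, hPcard i, mul_pow] at hprod
      have hcan : (1 - lam) ^ (k-1) * (∏ j ∈ P i, x j) * (∏ j ∈ P i, x j) ^ (k-1)
          = x h ^ (k-1) * (∏ j ∈ P i, x j) ^ (k-1) := by
        calc (1 - lam) ^ (k-1) * (∏ j ∈ P i, x j) * (∏ j ∈ P i, x j) ^ (k-1)
            = (1 - lam) ^ (k-1) * (∏ j ∈ P i, x j) ^ k := by
              rw [mul_assoc, mul_comm (∏ j ∈ P i, x j), hxpow]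
          _ = x h ^ (k-1) * (∏ j ∈ P i, x j) ^ (k-1) := by rw [hprod]
      exact mul_right_cancel₀ (pow_ne_zero _ hprodne) hcan
    refine ⟨S.card, ?_, ?_, ?_⟩
    · calc S.card ≤ (Finset.univ : Finset (Fin d)).card := Finset.card_filter_le _ _
        _ = d := by simp
    · have hsplit := Finset.sum_filter_add_sum_filter_not (Finset.univ : Finset (Fin d))
        (fun i : Fin d => ∀ v ∈ P i, x v ≠ 0)
        (fun i : Fin d => (1 - lam) ^ (k-1) * ∏ j ∈ P i, x j)
      have hgsum : ∑ i ∈ S, (1 - lam) ^ (k-1) * ∏ j ∈ P i, x j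
          = S.card * x h ^ (k-1) := by
        rw [Finset.sum_congr rfl hgood, Finset.sum_const, nsmul_eq_mul]
      have hbsum : ∑ i ∈ Finset.univ.filter (fun i : Fin d => ¬ ∀ v ∈ P i, x v ≠ 0),
          (1 - lam) ^ (k-1) * ∏ j ∈ P i, x j = 0 := by
        apply Finset.sum_eq_zero
        intro i hi
        have hni := (Finset.mem_filter.mp hi).2
        push_neg at hni
        obtain ⟨v, hv, hv0⟩ := hni
        rw [Finset.prod_eq_zero hv hv0, mul_zero]
      have htot : (1 - lam) ^ (k-1) * ∑ i : Fin d, ∏ j ∈ P i, x j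
          = S.card * x h ^ (k-1) := by
        rw [Finset.mul_sum, ← hsplit]
        rw [hbsum, add_zero]
        exact hgsum
      have hfinal : ((d:ℝ) - lam) * (1 - lam) ^ (k-1) * x h ^ (k-1)
          = S.card * x h ^ (k-1) := by
        rw [← htot, ← hheq]
        ring
      have hcanc : ((d:ℝ) - lam) * (1 - lam) ^ (k-1) = S.card :=
        mul_right_cancel₀ (pow_ne_zero _ hxh) hfinal
      rw [hneg lam] at hcanc
      linear_combination hcanc
    · intro hSd i
      have hSuniv : S = Finset.univ := Finset.eq_univ_of_card S (by rw [hSd]; simp)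
      rcases eq_or_ne i h with rfl | hih
      · exact hxh
      · obtain ⟨i₀, hi₀⟩ := hPcover i hih
        have hiS : i₀ ∈ S := hSuniv ▸ Finset.mem_univ i₀
        exact (Finset.mem_filter.mp hiS).2 i hi₀
  obtain ⟨x₀, hx₀, heig₀⟩ := hlam.1
  obtain ⟨s₀, hs₀d, hs₀eq, -⟩ := key x₀ hx₀ heig₀
  have hlamt : lam = t := by
    rcases eq_or_lt_of_le htle with h' | h'
    · exact h'.symm
    · exfalso
      have hmono := auxMono (m := k - 1) hd1 hdt h'
      rw [hteq, hs₀eq] at hmono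
      have hle : (s₀:ℝ) ≤ d := Nat.cast_le.mpr hs₀d
      linarith
  constructor
  · intro x hx heig i
    obtain ⟨s, hsd, hseq, hfull⟩ := key x hx heig
    have hs : (s:ℝ) = (d:ℝ) := by rw [← hseq, hlamt]; exact hteq
    exact hfull (Nat.cast_injective hs) i
  · exact ⟨z, hzne, fun i => by rw [hlamt]; exact hzeig i, 1, fun i hi => hz_v i hi⟩
end

section
/- Let k be odd and let G=(V,E) be a k-uniform hyperstar of size d>1 with Laplacian tensor L. If z∈ℝ^n is an H-eigenvector of L corresponding to λ(L), then z_i takes one constant value for all i∈sup(z) with i not the heart; moreover, whenever sup(z) contains a vertex other than the heart, the sign of z at the heart is opposite to the sign of z at the non-heart vertices in sup(z). -/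
open Finset

variable {α : Type*} [DecidableEq α]

/-- For `k` odd and a `k`-uniform hyperstar of size `d > 1` with heart
`h` and Laplacian tensor `L`: if `z` is an H-eigenvector of `L` corresponding to
`λ(L)`, then `z i` is a constant for all `i` in the support of `z` other than the
heart; moreover, whenever the support of `z` contains a vertex other than the heart,
the sign of `z` at the heart is opposite to its sign at the non-heart vertices of the
support. -/
theorem hyperstar_odd_eigvec_structure {n k d : ℕ} (hk : 3 ≤ k) (hkn : k ≤ n)
    (hkodd : Odd k) (hd : 1 < d) (h : Fin n) (P : Fin d → Finset (Fin n))
    (hhP : ∀ i, h ∉ P i) (hPcard : ∀ i, (P i).card = k - 1)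
    (hPdisj : ∀ i j, i ≠ j → Disjoint (P i) (P j))
    (hPcover : ∀ v : Fin n, v ≠ h → ∃ i, v ∈ P i)
    (E : Finset (Finset (Fin n)))
    (hE : E = Finset.image (fun i => insert h (P i)) Finset.univ)
    (lam : ℝ) (hlam : IsLargestLapEig k E lam)
    (z : Fin n → ℝ) (hz : z ≠ 0)
    (heig : ∀ i, lapAct k E z i = lam * z i ^ (k - 1)) :
    (∃ c : ℝ, ∀ i, i ≠ h → z i ≠ 0 → z i = c) ∧
    (∀ i, i ≠ h → z i ≠ 0 → z h * z i < 0) := by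
  classical
  have hk1 : 2 ≤ k - 1 := by omega
  have hknz : k - 1 ≠ 0 := by omega
  have hek : Even (k - 1) := by
    obtain ⟨m, hm⟩ := hkodd; exact ⟨m, by omega⟩
  have hok : Odd k := hkodd
  have hPne : ∀ i, (P i).Nonempty := fun i =>
    Finset.card_pos.mp (by rw [hPcard i]; omega)
  have hinj : Function.Injective (fun i => insert h (P i)) := by
    intro i j hij
    by_contra hne
    have h1 : P i = P j := by
      have := congrArg (fun s => Finset.erase s h) hij
      simpa [Finset.erase_insert (hhP i), Finset.erase_insert (hhP j)] using this
    obtain ⟨v, hv⟩ := hPne j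
    have := hPdisj i j hne
    rw [h1] at this
    exact (Finset.disjoint_left.mp this hv) hv
  have hEcard : E.card = d := by
    rw [hE, Finset.card_image_of_injective _ hinj, Finset.card_univ, Fintype.card_fin]
  have hmemE : ∀ e, e ∈ E ↔ ∃ i, insert h (P i) = e := by
    intro e; simp [hE]
  have hfilter : ∀ (v : Fin n) (i : Fin d), v ≠ h → v ∈ P i →
      E.filter (fun e => v ∈ e) = {insert h (P i)} := by
    intro v i hvh hvi
    ext e
    simp only [Finset.mem_filter, Finset.mem_singleton, hmemE]
    constructor
    · rintro ⟨⟨j, rfl⟩, hve⟩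
      have hvj : v ∈ P j := by
        rcases Finset.mem_insert.mp hve with h1 | h1
        · exact absurd h1 hvh
        · exact h1
      have hji : j = i := by
        by_contra hne
        exact (Finset.disjoint_left.mp (hPdisj j i hne) hvj) hvi
      rw [hji]
    · rintro rfl
      exact ⟨⟨i, rfl⟩, Finset.mem_insert_of_mem hvi⟩
  have hfilterh : E.filter (fun e => h ∈ e) = E := by
    apply Finset.filter_true_of_mem
    intro e he
    obtain ⟨i, rfl⟩ := (hmemE e).mp he
    exact Finset.mem_insert_self _ _
  -- `d` is an H-eigenvalue (eigenvector: indicator of the heart), so `d ≤ lam`.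
  have hdeig : IsLapEig k E (d : ℝ) := by
    refine ⟨fun v => if v = h then 1 else 0, ?_, ?_⟩
    · intro h0
      have := congrFun h0 h
      simp at this
    · intro v
      by_cases hvh : v = h
      · subst hvh
        have hsum : ∑ e ∈ E.filter (fun e => v ∈ e),
            ∏ j ∈ e.erase v, (if j = v then (1:ℝ) else 0) = 0 := by
          rw [hfilterh]
          apply Finset.sum_eq_zero
          intro e he
          obtain ⟨i, rfl⟩ := (hmemE e).mp he
          obtain ⟨w, hw⟩ := hPne i
          refine Finset.prod_eq_zero (i := w) ?_ ?_
          · rw [Finset.erase_insert (hhP i)]; exact hw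
          · have hwv : w ≠ v := fun hwv => hhP i (hwv ▸ hw)
            simp [hwv]
        have hdegh : hdeg E v = d := by
          unfold hdeg; rw [hfilterh, hEcard]
        simp only [lapAct, hsum, hdegh, if_pos rfl, one_pow, sub_zero, mul_one]
      · have hsum : ∑ e ∈ E.filter (fun e => v ∈ e),
            ∏ j ∈ e.erase v, (if j = h then (1:ℝ) else 0) = 0 := by
          apply Finset.sum_eq_zero
          intro e he
          rw [Finset.mem_filter] at he
          obtain ⟨i, rfl⟩ := (hmemE e).mp he.1
          have hvi : v ∈ P i := by
            rcases Finset.mem_insert.mp he.2 with h1 | h1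
            · exact absurd h1 hvh
            · exact h1
          obtain ⟨w, hw, hwv⟩ := Finset.exists_mem_ne
            (by rw [hPcard i]; omega) v
          refine Finset.prod_eq_zero (i := w) ?_ ?_
          · exact Finset.mem_erase.mpr ⟨hwv, Finset.mem_insert_of_mem hw⟩
          · have hwh : w ≠ h := fun hwh => hhP i (hwh ▸ hw)
            simp [hwh]
        have : (if v = h then (1:ℝ) else 0) = 0 := by simp [hvh]
        simp only [lapAct, hsum, this, zero_pow hknz, mul_zero, sub_zero]
  have hdlam : (d : ℝ) ≤ lam := hlam.2 _ hdeig
  have hlam1 : 1 < lam := by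
    have : (1 : ℝ) < (d : ℝ) := by exact_mod_cast hd
    linarith
  have hlne : 1 - lam < 0 := by linarith
  -- Key step: for every non-heart `v` in the support, `z h = (1 - lam) * z v`.
  have key : ∀ v : Fin n, v ≠ h → z v ≠ 0 → z h = (1 - lam) * z v := by
    intro v hvh hzv
    obtain ⟨i, hvi⟩ := hPcover v hvh
    -- the eigen-equation for a vertex `u ∈ P i`
    have eqn : ∀ u ∈ P i, z h * ∏ j ∈ (P i).erase u, z j = (1 - lam) * z u ^ (k - 1) := by
      intro u hu
      have huh : u ≠ h := fun huh => hhP i (huh ▸ hu)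
      have hf := hfilter u i huh hu
      have hdeg1 : hdeg E u = 1 := by unfold hdeg; rw [hf]; simp
      have heq := heig u
      rw [lapAct, hdeg1, hf, Finset.sum_singleton] at heq
      have herase : (insert h (P i)).erase u = insert h ((P i).erase u) :=
        Finset.erase_insert_of_ne (fun hhu => huh hhu.symm)
      have hhni : h ∉ (P i).erase u := fun hmem => hhP i (Finset.mem_of_mem_erase hmem)
      rw [herase, Finset.prod_insert hhni] at heq
      push_cast at heq
      linarith
    -- all factors are nonzero
    have hne0 : ∀ u ∈ P i, z u ≠ 0 := by
      intro u hu
      have hv := eqn v hvi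
      have hpos : 0 < z v ^ (k - 1) := hek.pow_pos hzv
      have hlhs : z h * ∏ j ∈ (P i).erase v, z j ≠ 0 := by
        rw [hv]; exact ne_of_lt (mul_neg_of_neg_of_pos hlne hpos)
      rcases eq_or_ne u v with rfl | huv
      · exact hzv
      · intro hzu
        apply hlhs
        rw [Finset.prod_eq_zero (Finset.mem_erase.mpr ⟨huv, hu⟩) hzu, mul_zero]
    -- all values on `P i` are equal
    have hallk : ∀ u ∈ P i, (1 - lam) * z u ^ k = z h * ∏ j ∈ P i, z j := by
      intro u hu
      have := eqn u hu
      have hmul : z u * ∏ j ∈ (P i).erase u, z j = ∏ j ∈ P i, z j :=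
        Finset.mul_prod_erase _ _ hu
      have hk' : z u ^ k = z u ^ (k - 1) * z u := by
        rw [← pow_succ]; congr 1; omega
      calc (1 - lam) * z u ^ k = (1 - lam) * z u ^ (k - 1) * z u := by rw [hk']; ring
        _ = (z h * ∏ j ∈ (P i).erase u, z j) * z u := by rw [this]
        _ = z h * ∏ j ∈ P i, z j := by rw [← hmul]; ring
    have hallv : ∀ u ∈ P i, z u = z v := by
      intro u hu
      have h1 := hallk u hu
      have h2 := hallk v hvi
      have hpow : z u ^ k = z v ^ k := by
        have : (1 - lam) * z u ^ k = (1 - lam) * z v ^ k := by rw [h1, h2]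
        exact mul_left_cancel₀ (ne_of_lt hlne) this
      exact hok.strictMono_pow.injective hpow
    -- conclude
    have hprodv : ∏ j ∈ (P i).erase v, z j = z v ^ (k - 2) := by
      rw [Finset.prod_congr rfl (fun j hj => hallv j (Finset.mem_of_mem_erase hj)),
        Finset.prod_const, Finset.card_erase_of_mem hvi, hPcard i]
      congr 1
    have hv := eqn v hvi
    rw [hprodv] at hv
    have hk2 : z v ^ (k - 1) = z v ^ (k - 2) * z v := by
      rw [← pow_succ]; congr 1; omega
    rw [hk2] at hv
    have hpne : z v ^ (k - 2) ≠ 0 := pow_ne_zero _ hzv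
    have : z h * z v ^ (k - 2) = ((1 - lam) * z v) * z v ^ (k - 2) := by
      rw [hv]; ring
    exact mul_right_cancel₀ hpne this
  constructor
  · refine ⟨z h / (1 - lam), fun v hvh hzv => ?_⟩
    have := key v hvh hzv
    field_simp [ne_of_lt hlne]
    linarith [this]
  · intro v hvh hzv
    have := key v hvh hzv
    rw [this]
    have : (1 - lam) * z v * z v = (1 - lam) * (z v * z v) := by ring
    rw [this]
    exact mul_neg_of_neg_of_pos hlne (mul_self_pos.mpr hzv)
end
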